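/- arXiv:2001.03959 — 3 statements merged into one kernel-verified Lean document; each statement's English description precedes it below -/
import Mathlib

section
/- Let λ₁ > 0, λ₂ > 0, μ > 0, and set λ = λ₁ + λ₂, ρ₁ = λ₁/μ, ρ₂ = λ₂/μ, ρ = ρ₁ + ρ₂. Define the row vector π ∈ ℝ^5 by π = (1/(2ρ₁ρ₂ + ρ + 1)) · [1, ρ₁, ρ₂, ρ₁ρ₂, ρ₁ρ₂]. Let D be the 5×5 diagonal matrix diag(λ, λ+μ, λ₁+μ, λ₁+μ, λ₁+μ), and let Q be the 5×5 matrix whose rows (indexed 0 to 4) are: row 0 = [0, λ₁, λ₂, 0, 0]; row 1 = [μ, λ₁, 0, λ₂, 0]; row 2 = [μ, 0, 0, 0, λ₁]; row 3 = [0, 0, μ, λ₁, 0]; row 4 = [0, μ, 0, 0, λ₁]. Then the entries of π are all positive, they sum to 1, and π·D = π·Q. -/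
open Matrix

theorem policy23_stationary_distribution
    (lam1 lam2 mu : ℝ) (hlam1 : 0 < lam1) (hlam2 : 0 < lam2) (hmu : 0 < mu)
    (lam : ℝ) (hlam : lam = lam1 + lam2)
    (rho1 rho2 rho : ℝ) (hrho1 : rho1 = lam1 / mu) (hrho2 : rho2 = lam2 / mu)
    (hrho : rho = rho1 + rho2)
    (pi : Fin 5 → ℝ)
    (hpi : pi = fun i => (1 / (2 * rho1 * rho2 + rho + 1)) *
      ![1, rho1, rho2, rho1 * rho2, rho1 * rho2] i)
    (D Q : Matrix (Fin 5) (Fin 5) ℝ)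
    (hD : D = Matrix.diagonal ![lam, lam + mu, lam1 + mu, lam1 + mu, lam1 + mu])
    (hQ : Q = Matrix.of
      ![![0, lam1, lam2, 0, 0],
        ![mu, lam1, 0, lam2, 0],
        ![mu, 0, 0, 0, lam1],
        ![0, 0, mu, lam1, 0],
        ![0, mu, 0, 0, lam1]]) :
    (∀ i, 0 < pi i) ∧ (∑ i, pi i = 1) ∧ pi ᵥ* D = pi ᵥ* Q := by
  have hr1 : 0 < rho1 := by rw [hrho1]; positivity
  have hr2 : 0 < rho2 := by rw [hrho2]; positivity
  have hden : 0 < 2 * rho1 * rho2 + rho + 1 := by rw [hrho]; positivity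
  have hmu' : mu ≠ 0 := ne_of_gt hmu
  refine ⟨?_, ?_, ?_⟩
  · intro i
    fin_cases i <;> simp [hpi] <;> positivity
  · subst hpi
    simp [Fin.sum_univ_five]
    rw [hrho]
    field_simp
    ring
  · have h1 : lam1 = rho1 * mu := by rw [hrho1]; field_simp
    have h2 : lam2 = rho2 * mu := by rw [hrho2]; field_simp
    subst hpi hD hQ hlam hrho
    funext j
    fin_cases j <;>
      simp [vecMul, dotProduct, Fin.sum_univ_five, Matrix.diagonal,
        Matrix.vecHead, Matrix.vecTail] <;>
      simp only [h1, h2] <;> field_simp <;> ring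
end

section
/- Let ρ₁ > 0, ρ₂ > 0, μ > 0 and ρ = ρ₁ + ρ₂. Define v00 = (ρ₁²(2ρ+5) + (4ρ₁+1)(ρ₂+1)) / (μρ₁(1+ρ₁)²(1+ρ)(1+ρ+2ρ₁ρ₂)), v10 = ((1+ρ₂)(ρ₁³+4ρ₁²+1) + ρ₁(5ρ₂+4)) / (μ(1+ρ₂)(1+ρ₁)²(1+ρ+2ρ₁ρ₂)), v20 = ρ₂(ρ₁²(2ρ+6) + (4ρ₁+1)(ρ₂+1)) / (μρ₁(1+ρ₁)²(1+ρ)(1+ρ+2ρ₁ρ₂)), v30 = ρ₂((1+ρ₂)(2ρ₁³+6ρ₁²+1) + ρ₁(6ρ₂+5)) / (μ(1+ρ₂)(1+ρ₁)²(1+ρ+2ρ₁ρ₂)), and v40 = ρ₂(ρ₁²(ρ₁²+5ρ₁+ρ₁ρ₂+4ρ₂+9) + (5ρ₁+1)(1+ρ₂)) / (μ(1+ρ₁)²(1+ρ)(1+ρ+2ρ₁ρ₂)). Then v00 + v10 + v20 + v30 + v40 = ((ρ₂+1)² + ρ₁(6ρ₂²+11ρ₂+5) + ρ₁²(13ρ₂²+24ρ₂+10)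 + ρ₁³(10ρ₂²+27ρ₂+10) + ρ₁⁴(3ρ₂²+14ρ₂+5) + ρ₁⁵(3ρ₂+1)) / (μρ₁(1+ρ₁)²(ρ₁²(2ρ₂+1) + (ρ₂+1)²(2ρ₁+1))). -/
theorem policy2_aoi_sum
    (rho1 rho2 mu : ℝ) (hrho1 : 0 < rho1) (hrho2 : 0 < rho2) (hmu : 0 < mu)
    (rho : ℝ) (hrho : rho = rho1 + rho2)
    (v00 v10 v20 v30 v40 : ℝ)
    (hv00 : v00 = (rho1 ^ 2 * (2 * rho + 5) + (4 * rho1 + 1) * (rho2 + 1)) /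
      (mu * rho1 * (1 + rho1) ^ 2 * (1 + rho) * (1 + rho + 2 * rho1 * rho2)))
    (hv10 : v10 = ((1 + rho2) * (rho1 ^ 3 + 4 * rho1 ^ 2 + 1) + rho1 * (5 * rho2 + 4)) /
      (mu * (1 + rho2) * (1 + rho1) ^ 2 * (1 + rho + 2 * rho1 * rho2)))
    (hv20 : v20 = rho2 * (rho1 ^ 2 * (2 * rho + 6) + (4 * rho1 + 1) * (rho2 + 1)) /
      (mu * rho1 * (1 + rho1) ^ 2 * (1 + rho) * (1 + rho + 2 * rho1 * rho2)))
    (hv30 : v30 = rho2 * ((1 + rho2) * (2 * rho1 ^ 3 + 6 * rho1 ^ 2 + 1) + rho1 * (6 * rho2 + 5)) /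
      (mu * (1 + rho2) * (1 + rho1) ^ 2 * (1 + rho + 2 * rho1 * rho2)))
    (hv40 : v40 = rho2 * (rho1 ^ 2 * (rho1 ^ 2 + 5 * rho1 + rho1 * rho2 + 4 * rho2 + 9) +
        (5 * rho1 + 1) * (1 + rho2)) /
      (mu * (1 + rho1) ^ 2 * (1 + rho) * (1 + rho + 2 * rho1 * rho2))) :
    v00 + v10 + v20 + v30 + v40 =
      ((rho2 + 1) ^ 2 + rho1 * (6 * rho2 ^ 2 + 11 * rho2 + 5) +
        rho1 ^ 2 * (13 * rho2 ^ 2 + 24 * rho2 + 10) +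
        rho1 ^ 3 * (10 * rho2 ^ 2 + 27 * rho2 + 10) +
        rho1 ^ 4 * (3 * rho2 ^ 2 + 14 * rho2 + 5) +
        rho1 ^ 5 * (3 * rho2 + 1)) /
      (mu * rho1 * (1 + rho1) ^ 2 *
        (rho1 ^ 2 * (2 * rho2 + 1) + (rho2 + 1) ^ 2 * (2 * rho1 + 1))) := by
  subst hrho hv00 hv10 hv20 hv30 hv40
  have h1 : mu ≠ 0 := ne_of_gt hmu
  have h2 : rho1 ≠ 0 := ne_of_gt hrho1
  have h3 : (1 + rho1) ≠ 0 := by positivity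
  have h4 : (1 + rho2) ≠ 0 := by positivity
  have h5 : (1 + (rho1 + rho2)) ≠ 0 := by positivity
  have h6 : (1 + (rho1 + rho2) + 2 * rho1 * rho2) ≠ 0 := by positivity
  have h7 : (rho1 ^ 2 * (2 * rho2 + 1) + (rho2 + 1) ^ 2 * (2 * rho1 + 1)) ≠ 0 := by positivity
  field_simp
  ring
end

section
/- Let ρ₁ > 0, ρ₂ > 0, μ > 0 and ρ = ρ₁ + ρ₂. Define v00 = (ρ₁³ + ρ₁²((ρ₂+2)²−1) + (ρ₂+1)²(3ρ₁+1)) / (μρ₁(1+ρ₁)(1+ρ₂)(1+ρ)(1+ρ+2ρ₁ρ₂)), v10 = ((1+ρ₂)(2ρ₁²+1) + ρ₁(4ρ₂+3)) / (μ(1+ρ₂)(1+ρ₁)(1+ρ+2ρ₁ρ₂)), v20 = ρ₂(ρ₁³(ρ₂+2) + ρ₁²(ρ₂²+5ρ₂+4) + (3ρ₁+1)(ρ₂+1)²) / (μρ₁(1+ρ₁)(1+ρ₂)(1+ρ)(1+ρ+2ρ₁ρ₂)), v30 = ρ₂((ρ₂+1)(3ρ₁²+1) + ρ₁(5ρ₂+4))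 / (μ(1+ρ₁)(1+ρ₂)(1+ρ+2ρ₁ρ₂)), and v40 = ρ₂(ρ₁³(2ρ₂+3) + 2ρ₁²((ρ₂+2)²−1) + (4ρ₁+1)(ρ₂+1)²) / (μ(1+ρ₁)(1+ρ₂)(1+ρ)(1+ρ+2ρ₁ρ₂)). Then v00 + v10 + v20 + v30 + v40 = ((ρ₂+1)³ + ρ₁(5ρ₂³+14ρ₂²+13ρ₂+4) + ρ₁²(10ρ₂³+28ρ₂²+25ρ₂+7) + ρ₁³(5ρ₂³+22ρ₂²+23ρ₂+6) + ρ₁⁴(5ρ₂²+8ρ₂+2)) / (μρ₁(1+ρ₁)(1+ρ₂)(ρ₁²(2ρ₂+1) + (ρ₂+1)²(2ρ₁+1))). -/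
theorem policy3_aoi_sum
    (rho1 rho2 mu : ℝ) (hrho1 : 0 < rho1) (hrho2 : 0 < rho2) (hmu : 0 < mu)
    (rho : ℝ) (hrho : rho = rho1 + rho2)
    (v00 v10 v20 v30 v40 : ℝ)
    (hv00 : v00 = (rho1 ^ 3 + rho1 ^ 2 * ((rho2 + 2) ^ 2 - 1) +
        (rho2 + 1) ^ 2 * (3 * rho1 + 1)) /
      (mu * rho1 * (1 + rho1) * (1 + rho2) * (1 + rho) * (1 + rho + 2 * rho1 * rho2)))
    (hv10 : v10 = ((1 + rho2) * (2 * rho1 ^ 2 + 1) + rho1 * (4 * rho2 + 3)) /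
      (mu * (1 + rho2) * (1 + rho1) * (1 + rho + 2 * rho1 * rho2)))
    (hv20 : v20 = rho2 * (rho1 ^ 3 * (rho2 + 2) + rho1 ^ 2 * (rho2 ^ 2 + 5 * rho2 + 4) +
        (3 * rho1 + 1) * (rho2 + 1) ^ 2) /
      (mu * rho1 * (1 + rho1) * (1 + rho2) * (1 + rho) * (1 + rho + 2 * rho1 * rho2)))
    (hv30 : v30 = rho2 * ((rho2 + 1) * (3 * rho1 ^ 2 + 1) + rho1 * (5 * rho2 + 4)) /
      (mu * (1 + rho1) * (1 + rho2) * (1 + rho + 2 * rho1 * rho2)))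
    (hv40 : v40 = rho2 * (rho1 ^ 3 * (2 * rho2 + 3) + 2 * rho1 ^ 2 * ((rho2 + 2) ^ 2 - 1) +
        (4 * rho1 + 1) * (rho2 + 1) ^ 2) /
      (mu * (1 + rho1) * (1 + rho2) * (1 + rho) * (1 + rho + 2 * rho1 * rho2))) :
    v00 + v10 + v20 + v30 + v40 =
      ((rho2 + 1) ^ 3 + rho1 * (5 * rho2 ^ 3 + 14 * rho2 ^ 2 + 13 * rho2 + 4) +
        rho1 ^ 2 * (10 * rho2 ^ 3 + 28 * rho2 ^ 2 + 25 * rho2 + 7) +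
        rho1 ^ 3 * (5 * rho2 ^ 3 + 22 * rho2 ^ 2 + 23 * rho2 + 6) +
        rho1 ^ 4 * (5 * rho2 ^ 2 + 8 * rho2 + 2)) /
      (mu * rho1 * (1 + rho1) * (1 + rho2) *
        (rho1 ^ 2 * (2 * rho2 + 1) + (rho2 + 1) ^ 2 * (2 * rho1 + 1))) := by
  subst hrho hv00 hv10 hv20 hv30 hv40
  have h1 : mu ≠ 0 := hmu.ne'
  have h2 : rho1 ≠ 0 := hrho1.ne'
  have h3 : (1 + rho1) ≠ 0 := by positivity
  have h4 : (1 + rho2) ≠ 0 := by positivity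
  have h5 : (1 + (rho1 + rho2)) ≠ 0 := by positivity
  have h6 : (1 + (rho1 + rho2) + 2 * rho1 * rho2) ≠ 0 := by positivity
  have h7 : (rho1 ^ 2 * (2 * rho2 + 1) + (rho2 + 1) ^ 2 * (2 * rho1 + 1)) ≠ 0 := by positivity
  field_simp
  ring
end
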